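/- Let x, y, d ≥ 1 be natural numbers, let ρ_x be a positive semidefinite complex matrix with trace 1 indexed by (Fin x → Fin d), and let ρ_y be a positive semidefinite complex matrix with trace 1 indexed by (Fin y → Fin d). Let M be their tensor product, the matrix indexed by ((Fin x ⊕ Fin y) → Fin d) with entries M(F, G) = ρ_x(F ∘ inl, G ∘ inl) · ρ_y(F ∘ inr, G ∘ inr). Then Re tr(M · Σ_{π ∈ Perm(Fin x ⊕ Fin y)} P_π) ≥ Re tr(ρ_x · Σ_{π ∈ Perm(Fin x)} P_π) · Re tr(ρ_y · Σ_{π ∈ Perm(Fin y)} P_π). -/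

import Mathlib

open Matrix
open scoped ComplexOrder

/-- The permutation operator `P_π` on `(ℂ^d)^{⊗ι}`: its `(f, g)` entry is `1` if
`f = g ∘ π⁻¹` and `0` otherwise. -/
def permOp (d : ℕ) (ι : Type*) [Fintype ι] [DecidableEq ι] (π : Equiv.Perm ι) :
    Matrix (ι → Fin d) (ι → Fin d) ℂ :=
  fun f g => if f = g ∘ ⇑π⁻¹ then 1 else 0

set_option linter.unusedSectionVars false
set_option linter.unusedVariables false

namespace Stmt14Aux

open Equiv Sum
open Complex (normSq)

variable {d : ℕ}





/-- Glue a function on `{a // p a}` and one on the complement into a function on `α`. -/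
def patch {α D : Type*} (p : α → Prop) [DecidablePred p]
    (s : {a // p a} → D) (m : {a // ¬ p a} → D) : α → D :=
  fun a => if h : p a then s ⟨a, h⟩ else m ⟨a, h⟩

def patchEquiv {α D : Type*} (p : α → Prop) [DecidablePred p] :
    (({a // p a} → D) × ({a // ¬ p a} → D)) ≃ (α → D) where
  toFun x := patch p x.1 x.2
  invFun f := (fun a => f a.1, fun a => f a.1)
  left_inv := by
    rintro ⟨s, m⟩
    refine Prod.ext ?_ ?_ <;> funext a <;> simp [patch, a.2]
  right_inv := by
    intro f; funext a; by_cases h : p a <;> simp [patch, h]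

lemma sum_patch {α : Type*} [Fintype α] [DecidableEq α] (p : α → Prop) [DecidablePred p]
    {M : Type*} [AddCommMonoid M] (φ : (α → Fin d) → M) :
    ∑ f : α → Fin d, φ f
      = ∑ s : {a // p a} → Fin d, ∑ m : {a // ¬ p a} → Fin d, φ (patch p s m) := by
  rw [← Equiv.sum_comp (patchEquiv p (D := Fin d)) φ, Fintype.sum_prod_type]
  rfl

lemma sum_precomp {α β : Type*} [Fintype α] [Fintype β] [DecidableEq α] [DecidableEq β] (e : α ≃ β)
    {M : Type*} [AddCommMonoid M] (φ : (α → Fin d) → M) :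
    ∑ f : β → Fin d, φ (f ∘ ⇑e) = ∑ g : α → Fin d, φ g :=
  Equiv.sum_comp ((e.symm).arrowCongr (Equiv.refl (Fin d))) φ

lemma sum_elim {L R : Type*} [Fintype L] [Fintype R] [DecidableEq L] [DecidableEq R]
    {M : Type*} [AddCommMonoid M] (φ : ((L ⊕ R) → Fin d) → M) :
    ∑ F : (L ⊕ R) → Fin d, φ F
      = ∑ f : L → Fin d, ∑ g : R → Fin d, φ (Sum.elim f g) := by
  rw [← Equiv.sum_comp (Equiv.sumArrowEquivProdArrow L R (Fin d)).symm φ,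
    Fintype.sum_prod_type]
  rfl


/-- crossing equiv: elements of `A` sent to the right by `e` correspond to elements of `E`
whose `e.symm`-image is on the left. -/
def crossLR {A B C E : Type*} (e : A ⊕ B ≃ C ⊕ E) :
    {i : A // (e (inl i)).isRight} ≃ {j : E // (e.symm (inr j)).isLeft} where
  toFun i := ⟨(e (inl i.1)).getRight i.2, by
    have h : inr ((e (inl i.1)).getRight i.2) = e (inl i.1) := Sum.inr_getRight _ _
    have h2 : e.symm (inr ((e (inl i.1)).getRight i.2)) = inl i.1 := by
      rw [h, Equiv.symm_apply_apply]
    rw [h2]; rfl⟩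
  invFun j := ⟨(e.symm (inr j.1)).getLeft j.2, by
    have h : inl ((e.symm (inr j.1)).getLeft j.2) = e.symm (inr j.1) := Sum.inl_getLeft _ _
    have h2 : e (inl ((e.symm (inr j.1)).getLeft j.2)) = inr j.1 := by
      rw [h, Equiv.apply_symm_apply]
    rw [h2]; rfl⟩
  left_inv i := by
    apply Subtype.ext
    have h : inr ((e (inl i.1)).getRight i.2) = e (inl i.1) := Sum.inr_getRight _ _
    have h2 : e.symm (inr ((e (inl i.1)).getRight i.2)) = inl i.1 := by
      rw [h, Equiv.symm_apply_apply]
    simp only [h2, Sum.getLeft_inl]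
  right_inv j := by
    apply Subtype.ext
    have h : inl ((e.symm (inr j.1)).getLeft j.2) = e.symm (inr j.1) := Sum.inl_getLeft _ _
    have h2 : e (inl ((e.symm (inr j.1)).getLeft j.2)) = inr j.1 := by
      rw [h, Equiv.apply_symm_apply]
    simp only [h2, Sum.getRight_inr]

@[simp] lemma crossLR_spec {A B C E : Type*} (e : A ⊕ B ≃ C ⊕ E)
    (i : {i : A // (e (inl i)).isRight}) :
    e (inl i.1) = inr (crossLR e i).1 := (Sum.inr_getRight _ _).symm

def crossRL {A B C E : Type*} (e : A ⊕ B ≃ C ⊕ E) :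
    {j : B // (e (inr j)).isLeft} ≃ {l : C // (e.symm (inl l)).isRight} where
  toFun j := ⟨(e (inr j.1)).getLeft j.2, by
    have h2 : e.symm (inl ((e (inr j.1)).getLeft j.2)) = inr j.1 := by
      rw [Sum.inl_getLeft, Equiv.symm_apply_apply]
    rw [h2]; rfl⟩
  invFun l := ⟨(e.symm (inl l.1)).getRight l.2, by
    have h2 : e (inr ((e.symm (inl l.1)).getRight l.2)) = inl l.1 := by
      rw [Sum.inr_getRight, Equiv.apply_symm_apply]
    rw [h2]; rfl⟩
  left_inv j := by
    apply Subtype.ext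
    have h2 : e.symm (inl ((e (inr j.1)).getLeft j.2)) = inr j.1 := by
      rw [Sum.inl_getLeft, Equiv.symm_apply_apply]
    simp only [h2, Sum.getRight_inr]
  right_inv l := by
    apply Subtype.ext
    have h2 : e (inr ((e.symm (inl l.1)).getRight l.2)) = inl l.1 := by
      rw [Sum.inr_getRight, Equiv.apply_symm_apply]
    simp only [h2, Sum.getLeft_inl]

@[simp] lemma crossRL_spec {A B C E : Type*} (e : A ⊕ B ≃ C ⊕ E)
    (j : {j : B // (e (inr j)).isLeft}) :
    e (inr j.1) = inl (crossRL e j).1 := (Sum.inl_getLeft _ _).symm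

def sameLL {A B C E : Type*} (e : A ⊕ B ≃ C ⊕ E) :
    {i : A // ¬ (e (inl i)).isRight} ≃ {l : C // ¬ (e.symm (inl l)).isRight} where
  toFun i := ⟨(e (inl i.1)).getLeft (Sum.not_isRight.mp i.2), by
    have h2 : e.symm (inl ((e (inl i.1)).getLeft (Sum.not_isRight.mp i.2))) = inl i.1 := by
      rw [Sum.inl_getLeft, Equiv.symm_apply_apply]
    rw [h2]; simp⟩
  invFun l := ⟨(e.symm (inl l.1)).getLeft (Sum.not_isRight.mp l.2), by
    have h2 : e (inl ((e.symm (inl l.1)).getLeft (Sum.not_isRight.mp l.2))) = inl l.1 := by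
      rw [Sum.inl_getLeft, Equiv.apply_symm_apply]
    rw [h2]; simp⟩
  left_inv i := by
    apply Subtype.ext
    have h2 : e.symm (inl ((e (inl i.1)).getLeft (Sum.not_isRight.mp i.2))) = inl i.1 := by
      rw [Sum.inl_getLeft, Equiv.symm_apply_apply]
    simp only [h2, Sum.getLeft_inl]
  right_inv l := by
    apply Subtype.ext
    have h2 : e (inl ((e.symm (inl l.1)).getLeft (Sum.not_isRight.mp l.2))) = inl l.1 := by
      rw [Sum.inl_getLeft, Equiv.apply_symm_apply]
    simp only [h2, Sum.getLeft_inl]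

@[simp] lemma sameLL_spec {A B C E : Type*} (e : A ⊕ B ≃ C ⊕ E)
    (i : {i : A // ¬ (e (inl i)).isRight}) :
    e (inl i.1) = inl (sameLL e i).1 := (Sum.inl_getLeft _ _).symm

def sameRR {A B C E : Type*} (e : A ⊕ B ≃ C ⊕ E) :
    {j : B // ¬ (e (inr j)).isLeft} ≃ {b : E // ¬ (e.symm (inr b)).isLeft} where
  toFun j := ⟨(e (inr j.1)).getRight (Sum.not_isLeft.mp j.2), by
    have h2 : e.symm (inr ((e (inr j.1)).getRight (Sum.not_isLeft.mp j.2))) = inr j.1 := by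
      rw [Sum.inr_getRight, Equiv.symm_apply_apply]
    rw [h2]; simp⟩
  invFun b := ⟨(e.symm (inr b.1)).getRight (Sum.not_isLeft.mp b.2), by
    have h2 : e (inr ((e.symm (inr b.1)).getRight (Sum.not_isLeft.mp b.2))) = inr b.1 := by
      rw [Sum.inr_getRight, Equiv.apply_symm_apply]
    rw [h2]; simp⟩
  left_inv j := by
    apply Subtype.ext
    have h2 : e.symm (inr ((e (inr j.1)).getRight (Sum.not_isLeft.mp j.2))) = inr j.1 := by
      rw [Sum.inr_getRight, Equiv.symm_apply_apply]
    simp only [h2, Sum.getRight_inr]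
  right_inv b := by
    apply Subtype.ext
    have h2 : e (inr ((e.symm (inr b.1)).getRight (Sum.not_isLeft.mp b.2))) = inr b.1 := by
      rw [Sum.inr_getRight, Equiv.apply_symm_apply]
    simp only [h2, Sum.getRight_inr]

@[simp] lemma sameRR_spec {A B C E : Type*} (e : A ⊕ B ≃ C ⊕ E)
    (j : {j : B // ¬ (e (inr j)).isLeft}) :
    e (inr j.1) = inr (sameRR e j).1 := (Sum.inr_getRight _ _).symm


section Psi
variable {L R : Type*} [Fintype L] [Fintype R] [DecidableEq L] [DecidableEq R]

noncomputable def kap (π : Equiv.Perm (L ⊕ R)) :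
    {l : L // (π.symm (inl l)).isRight} ≃ {j : R // (π.symm (inr j)).isLeft} :=
  Fintype.equivOfCardEq (by
    have c1 := Fintype.card_congr (crossLR π)
    have c2 := Fintype.card_congr (sameLL π)
    have h1 := Fintype.card_subtype_compl (fun i : L => ((π (inl i)).isRight : Prop))
    have h2 := Fintype.card_subtype_compl (fun l : L => ((π.symm (inl l)).isRight : Prop))
    have h3 := Fintype.card_subtype_le (fun i : L => ((π (inl i)).isRight : Prop))
    have h4 := Fintype.card_subtype_le (fun l : L => ((π.symm (inl l)).isRight : Prop))
    omega)

noncomputable def psiL (π : Equiv.Perm (L ⊕ R)) : Equiv.Perm L :=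
  (Equiv.sumCompl (fun i : L => ((π (inl i)).isRight : Prop))).symm.trans
    ((Equiv.sumCongr ((crossLR π).trans (kap π).symm) (sameLL π)).trans
      (Equiv.sumCompl (fun l : L => ((π.symm (inl l)).isRight : Prop))))

lemma psiL_pos (π : Equiv.Perm (L ⊕ R)) (i : L) (h : (π (inl i)).isRight) :
    psiL π i = ((kap π).symm (crossLR π ⟨i, h⟩)).1 := by
  unfold psiL
  rw [Equiv.trans_apply, Equiv.trans_apply,
    Equiv.sumCompl_symm_apply_of_pos (p := fun i : L => ((π (inl i)).isRight : Prop)) h]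
  simp

lemma psiL_neg (π : Equiv.Perm (L ⊕ R)) (i : L) (h : ¬ (π (inl i)).isRight) :
    psiL π i = (sameLL π ⟨i, h⟩).1 := by
  unfold psiL
  rw [Equiv.trans_apply, Equiv.trans_apply,
    Equiv.sumCompl_symm_apply_of_neg (p := fun i : L => ((π (inl i)).isRight : Prop)) h]
  simp

noncomputable def psiR (π : Equiv.Perm (L ⊕ R)) : Equiv.Perm R :=
  (Equiv.sumCompl (fun j : R => ((π (inr j)).isLeft : Prop))).symm.trans
    ((Equiv.sumCongr ((crossRL π).trans (kap π)) (sameRR π)).trans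
      (Equiv.sumCompl (fun j : R => ((π.symm (inr j)).isLeft : Prop))))

lemma psiR_pos (π : Equiv.Perm (L ⊕ R)) (j : R) (h : (π (inr j)).isLeft) :
    psiR π j = ((kap π) (crossRL π ⟨j, h⟩)).1 := by
  unfold psiR
  rw [Equiv.trans_apply, Equiv.trans_apply,
    Equiv.sumCompl_symm_apply_of_pos (p := fun j : R => ((π (inr j)).isLeft : Prop)) h]
  simp

lemma psiR_neg (π : Equiv.Perm (L ⊕ R)) (j : R) (h : ¬ (π (inr j)).isLeft) :
    psiR π j = (sameRR π ⟨j, h⟩).1 := by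
  unfold psiR
  rw [Equiv.trans_apply, Equiv.trans_apply,
    Equiv.sumCompl_symm_apply_of_neg (p := fun j : R => ((π (inr j)).isLeft : Prop)) h]
  simp

end Psi

lemma sum_patch2 {α β : Type*} [Fintype α] [Fintype β] [DecidableEq α] [DecidableEq β]
    (p : α → Prop) [DecidablePred p] (q : β → Prop) [DecidablePred q]
    {M : Type*} [AddCommMonoid M] (Φ : (α → Fin d) → (β → Fin d) → M) :
    ∑ f : α → Fin d, ∑ g : β → Fin d, Φ f g
      = ∑ s : {a // p a} → Fin d, ∑ t : {b // q b} → Fin d,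
          ∑ m : {a // ¬ p a} → Fin d, ∑ m' : {b // ¬ q b} → Fin d,
            Φ (patch p s m) (patch q t m') := by
  rw [sum_patch (d := d) (M := M) p (fun f => ∑ g : β → Fin d, Φ f g)]
  refine Finset.sum_congr rfl fun s _ => ?_
  calc ∑ m : {a // ¬ p a} → Fin d, ∑ g : β → Fin d, Φ (patch p s m) g
      = ∑ m : {a // ¬ p a} → Fin d, ∑ t : {b // q b} → Fin d,
          ∑ m' : {b // ¬ q b} → Fin d, Φ (patch p s m) (patch q t m') :=
        Finset.sum_congr rfl (fun m _ => sum_patch q _)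
    _ = ∑ t : {b // q b} → Fin d, ∑ m : {a // ¬ p a} → Fin d,
          ∑ m' : {b // ¬ q b} → Fin d, Φ (patch p s m) (patch q t m') :=
        Finset.sum_comm

open scoped MatrixOrder in
lemma psd_eq_ct_mul_self {n : Type*} [Fintype n] [DecidableEq n] {A : Matrix n n ℂ}
    (hA : A.PosSemidef) : ∃ B : Matrix n n ℂ, A = Bᴴ * B := by
  obtain ⟨B, hB⟩ := CStarAlgebra.nonneg_iff_eq_star_mul_self.mp hA.nonneg
  exact ⟨B, hB⟩

lemma trace_mul_psd {n : Type*} [Fintype n] [DecidableEq n] {A B : Matrix n n ℂ}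
    (hA : A.PosSemidef) (hB : B.PosSemidef) : 0 ≤ (A * B).trace := by
  obtain ⟨X, rfl⟩ := psd_eq_ct_mul_self hA
  obtain ⟨Y, rfl⟩ := psd_eq_ct_mul_self hB
  have h : (Xᴴ * X * (Yᴴ * Y)).trace = ((X * Yᴴ)ᴴ * (X * Yᴴ)).trace := by
    simp only [conjTranspose_mul, conjTranspose_conjTranspose, ← Matrix.mul_assoc]
    rw [Matrix.trace_mul_comm]
    simp only [← Matrix.mul_assoc]
  rw [h]
  rw [Matrix.trace]
  apply Finset.sum_nonneg
  intro i _
  simp only [Matrix.diag_apply, Matrix.mul_apply, Matrix.conjTranspose_apply]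
  apply Finset.sum_nonneg
  intro m _
  exact star_mul_self_nonneg _

theorem core {L R : Type*} [Fintype L] [Fintype R] [DecidableEq L] [DecidableEq R]
    (v : (L → Fin d) → ℂ) (w : (R → Fin d) → ℂ)
    (hv : ∀ (e : Equiv.Perm L) f, v (f ∘ ⇑e) = v f)
    (hw : ∀ (e : Equiv.Perm R) g, w (g ∘ ⇑e) = w g)
    (π : Equiv.Perm (L ⊕ R)) :
    0 ≤ (∑ F : (L ⊕ R) → Fin d,
      (starRingEnd ℂ) (v (F ∘ inl) * w (F ∘ inr)) *
        (v ((F ∘ ⇑π) ∘ inl) * w ((F ∘ ⇑π) ∘ inr))).re := by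
  classical
  set qL : L → Prop := fun l => ((π.symm (inl l)).isRight : Prop) with hqLdef
  set qR : R → Prop := fun j => ((π.symm (inr j)).isLeft : Prop) with hqRdef
  let κ := kap π
  -- matrices
  set X : Matrix ({l // ¬ qL l} → Fin d) ({l // qL l} → Fin d) ℂ :=
    Matrix.of (fun m s => v (patch qL s m)) with hX
  set Y : Matrix ({j // ¬ qR j} → Fin d) ({l // qL l} → Fin d) ℂ :=
    Matrix.of (fun m' a => w (patch qR (fun j' => a (κ.symm j')) m')) with hY
  have hA1 : ∀ (s : {l // qL l} → Fin d) (m : {l // ¬ qL l} → Fin d)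
      (t : {j // qR j} → Fin d) (m' : {j // ¬ qR j} → Fin d),
      (Sum.elim (patch qL s m) (patch qR t m') ∘ ⇑π) ∘ inl
        = patch qL (fun l => t (κ l)) m ∘ ⇑(psiL π) := by
    intro s m t m'
    funext i
    by_cases h : (π (inl i)).isRight
    · have hc : π (inl i) = inr (crossLR π ⟨i, h⟩).1 := crossLR_spec π ⟨i, h⟩
      have hl : ((Sum.elim (patch qL s m) (patch qR t m') ∘ ⇑π) ∘ inl) i
          = t (crossLR π ⟨i, h⟩) := by
        simp only [Function.comp_apply, hc, Sum.elim_inr, patch]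
        rw [dif_pos (crossLR π ⟨i, h⟩).2]
      have hr : (patch qL (fun l => t (κ l)) m ∘ ⇑(psiL π)) i
          = t (crossLR π ⟨i, h⟩) := by
        simp only [Function.comp_apply, psiL_pos π i h, patch]
        rw [dif_pos ((kap π).symm (crossLR π ⟨i, h⟩)).2]
        simp [κ]
      rw [hl, hr]
    · have hc : π (inl i) = inl (sameLL π ⟨i, h⟩).1 := sameLL_spec π ⟨i, h⟩
      have hl : ((Sum.elim (patch qL s m) (patch qR t m') ∘ ⇑π) ∘ inl) i
          = m (sameLL π ⟨i, h⟩) := by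
        simp only [Function.comp_apply, hc, Sum.elim_inl, patch]
        rw [dif_neg (sameLL π ⟨i, h⟩).2]
      have hr : (patch qL (fun l => t (κ l)) m ∘ ⇑(psiL π)) i
          = m (sameLL π ⟨i, h⟩) := by
        simp only [Function.comp_apply, psiL_neg π i h, patch]
        rw [dif_neg (sameLL π ⟨i, h⟩).2]
      rw [hl, hr]
  have hA2 : ∀ (s : {l // qL l} → Fin d) (m : {l // ¬ qL l} → Fin d)
      (t : {j // qR j} → Fin d) (m' : {j // ¬ qR j} → Fin d),
      (Sum.elim (patch qL s m) (patch qR t m') ∘ ⇑π) ∘ inr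
        = patch qR (fun j' => s (κ.symm j')) m' ∘ ⇑(psiR π) := by
    intro s m t m'
    funext j
    by_cases h : (π (inr j)).isLeft
    · have hc : π (inr j) = inl (crossRL π ⟨j, h⟩).1 := crossRL_spec π ⟨j, h⟩
      have hl : ((Sum.elim (patch qL s m) (patch qR t m') ∘ ⇑π) ∘ inr) j
          = s (crossRL π ⟨j, h⟩) := by
        simp only [Function.comp_apply, hc, Sum.elim_inl, patch]
        rw [dif_pos (crossRL π ⟨j, h⟩).2]
      have hr : (patch qR (fun j' => s (κ.symm j')) m' ∘ ⇑(psiR π)) j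
          = s (crossRL π ⟨j, h⟩) := by
        simp only [Function.comp_apply, psiR_pos π j h, patch]
        rw [dif_pos ((kap π) (crossRL π ⟨j, h⟩)).2]
        simp [κ]
      rw [hl, hr]
    · have hc : π (inr j) = inr (sameRR π ⟨j, h⟩).1 := sameRR_spec π ⟨j, h⟩
      have hl : ((Sum.elim (patch qL s m) (patch qR t m') ∘ ⇑π) ∘ inr) j
          = m' (sameRR π ⟨j, h⟩) := by
        simp only [Function.comp_apply, hc, Sum.elim_inr, patch]
        rw [dif_neg (sameRR π ⟨j, h⟩).2]
      have hr : (patch qR (fun j' => s (κ.symm j')) m' ∘ ⇑(psiR π)) j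
          = m' (sameRR π ⟨j, h⟩) := by
        simp only [Function.comp_apply, psiR_neg π j h, patch]
        rw [dif_neg (sameRR π ⟨j, h⟩).2]
      rw [hl, hr]
  have key : (∑ F : (L ⊕ R) → Fin d,
      (starRingEnd ℂ) (v (F ∘ inl) * w (F ∘ inr)) *
        (v ((F ∘ ⇑π) ∘ inl) * w ((F ∘ ⇑π) ∘ inr))) = (Xᴴ * X * (Yᴴ * Y)).trace := by
    rw [sum_elim (d := d) (M := ℂ)]
    rw [sum_patch2 (d := d) (M := ℂ) qL qR]
    have step1 : ∀ (s : {l // qL l} → Fin d) (t : {j // qR j} → Fin d),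
        (∑ m : {l // ¬ qL l} → Fin d, ∑ m' : {j // ¬ qR j} → Fin d,
          (starRingEnd ℂ) (v (Sum.elim (patch qL s m) (patch qR t m') ∘ inl) *
              w (Sum.elim (patch qL s m) (patch qR t m') ∘ inr)) *
            (v ((Sum.elim (patch qL s m) (patch qR t m') ∘ ⇑π) ∘ inl) *
              w ((Sum.elim (patch qL s m) (patch qR t m') ∘ ⇑π) ∘ inr)))
          = (∑ m : {l // ¬ qL l} → Fin d,
              (starRingEnd ℂ) (v (patch qL s m)) * v (patch qL (fun l => t (κ l)) m)) *
            (∑ m' : {j // ¬ qR j} → Fin d,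
              (starRingEnd ℂ) (w (patch qR t m')) *
                w (patch qR (fun j' => s (κ.symm j')) m')) := by
      intro s t
      rw [Finset.sum_mul_sum]
      refine Finset.sum_congr rfl fun m _ => ?_
      refine Finset.sum_congr rfl fun m' _ => ?_
      rw [Sum.elim_comp_inl, Sum.elim_comp_inr, hA1 s m t m', hA2 s m t m',
        hv (psiL π), hw (psiR π)]
      simp only [_root_.map_mul]
      ring
    calc ∑ s : {l // qL l} → Fin d, ∑ t : {j // qR j} → Fin d,
          ∑ m : {l // ¬ qL l} → Fin d, ∑ m' : {j // ¬ qR j} → Fin d,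
          (starRingEnd ℂ) (v (Sum.elim (patch qL s m) (patch qR t m') ∘ inl) *
              w (Sum.elim (patch qL s m) (patch qR t m') ∘ inr)) *
            (v ((Sum.elim (patch qL s m) (patch qR t m') ∘ ⇑π) ∘ inl) *
              w ((Sum.elim (patch qL s m) (patch qR t m') ∘ ⇑π) ∘ inr))
        = ∑ s : {l // qL l} → Fin d, ∑ t : {j // qR j} → Fin d,
            (Xᴴ * X) s (fun l => t (κ l)) * (Yᴴ * Y) (fun l => t (κ l)) s := by
          have hGX : ∀ (s a : {l // qL l} → Fin d), (Xᴴ * X) s a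
              = ∑ m : {l // ¬ qL l} → Fin d,
                  (starRingEnd ℂ) (v (patch qL s m)) * v (patch qL a m) := by
            intro s a
            simp only [Matrix.mul_apply, Matrix.conjTranspose_apply, hX, Matrix.of_apply,
              starRingEnd_apply]
          have hGY : ∀ (a b : {l // qL l} → Fin d), (Yᴴ * Y) a b
              = ∑ m' : {j // ¬ qR j} → Fin d,
                  (starRingEnd ℂ) (w (patch qR (fun j' => a (κ.symm j')) m')) *
                    w (patch qR (fun j' => b (κ.symm j')) m') := by
            intro a b
            simp only [Matrix.mul_apply, Matrix.conjTranspose_apply, hY, Matrix.of_apply,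
              starRingEnd_apply]
          refine Finset.sum_congr rfl fun s _ => ?_
          refine Finset.sum_congr rfl fun t _ => ?_
          rw [step1 s t, hGX, hGY]
          simp only [Equiv.apply_symm_apply]
      _ = ∑ s : {l // qL l} → Fin d, ∑ a : {l // qL l} → Fin d,
            (Xᴴ * X) s a * (Yᴴ * Y) a s := by
          refine Finset.sum_congr rfl fun s _ => ?_
          exact sum_precomp (d := d) (M := ℂ) κ (fun a => (Xᴴ * X) s a * (Yᴴ * Y) a s)
      _ = (Xᴴ * X * (Yᴴ * Y)).trace := by
          rw [Matrix.trace]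
          refine Finset.sum_congr rfl fun s _ => ?_
          rw [Matrix.diag_apply, Matrix.mul_apply]
  rw [key]
  have h := trace_mul_psd (Matrix.posSemidef_conjTranspose_mul_self X)
    (Matrix.posSemidef_conjTranspose_mul_self Y)
  have := (Complex.le_def.mp h).1
  simpa using this

section SvalSec
variable {α : Type*} [Fintype α] [DecidableEq α]

noncomputable def Sval (d : ℕ) (v : (α → Fin d) → ℂ) : ℂ :=
  ∑ π : Equiv.Perm α, ∑ f : α → Fin d, (starRingEnd ℂ) (v f) * v (f ∘ ⇑π)

noncomputable def symv (d : ℕ) (v : (α → Fin d) → ℂ) : (α → Fin d) → ℂ :=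
  fun f => ∑ e : Equiv.Perm α, v (f ∘ ⇑e)

lemma comp_perm_assoc (f : α → Fin d) (e e' : Equiv.Perm α) :
    (f ∘ ⇑e) ∘ ⇑e' = f ∘ ⇑(e * e') := rfl

lemma symv_comp_perm (v : (α → Fin d) → ℂ) (e₀ : Equiv.Perm α) (f : α → Fin d) :
    symv d v (f ∘ ⇑e₀) = symv d v f := by
  unfold symv
  rw [← Equiv.sum_comp (Equiv.mulLeft e₀) (fun e => v (f ∘ ⇑e))]
  refine Finset.sum_congr rfl fun e _ => ?_
  rw [comp_perm_assoc]
  rfl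

lemma conj_mul_self (z : ℂ) :
    (starRingEnd ℂ) z * z = ((Complex.normSq z : ℝ) : ℂ) := by
  rw [mul_comm, Complex.mul_conj]

lemma conj_symv_sum (v : (α → Fin d) → ℂ) :
    ∑ f : α → Fin d, (starRingEnd ℂ) (symv d v f) * symv d v f
      = (Fintype.card (Equiv.Perm α) : ℂ) * Sval d v := by
  calc ∑ f : α → Fin d, (starRingEnd ℂ) (symv d v f) * symv d v f
      = ∑ f : α → Fin d, ∑ e : Equiv.Perm α, ∑ e' : Equiv.Perm α,
          (starRingEnd ℂ) (v (f ∘ ⇑e)) * v (f ∘ ⇑e') := by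
        refine Finset.sum_congr rfl fun f _ => ?_
        rw [symv, map_sum, Finset.sum_mul_sum]
    _ = ∑ e : Equiv.Perm α, ∑ f : α → Fin d, ∑ e' : Equiv.Perm α,
          (starRingEnd ℂ) (v (f ∘ ⇑e)) * v (f ∘ ⇑e') := Finset.sum_comm
    _ = ∑ _e : Equiv.Perm α, Sval d v := by
        refine Finset.sum_congr rfl fun e _ => ?_
        calc ∑ f : α → Fin d, ∑ e' : Equiv.Perm α,
              (starRingEnd ℂ) (v (f ∘ ⇑e)) * v (f ∘ ⇑e')
            = ∑ f : α → Fin d, ∑ e' : Equiv.Perm α,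
                (starRingEnd ℂ) (v (f ∘ ⇑e)) * v ((f ∘ ⇑e) ∘ ⇑(e⁻¹ * e')) := by
              refine Finset.sum_congr rfl fun f _ => ?_
              refine Finset.sum_congr rfl fun e' _ => ?_
              have hperm : e * (e⁻¹ * e') = e' := by group
              rw [comp_perm_assoc, hperm]
          _ = ∑ g : α → Fin d, ∑ e' : Equiv.Perm α,
                (starRingEnd ℂ) (v g) * v (g ∘ ⇑(e⁻¹ * e')) :=
              sum_precomp (d := d) (M := ℂ) e
                (fun g => ∑ e' : Equiv.Perm α,
                  (starRingEnd ℂ) (v g) * v (g ∘ ⇑(e⁻¹ * e')))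
          _ = ∑ g : α → Fin d, ∑ e'' : Equiv.Perm α,
                (starRingEnd ℂ) (v g) * v (g ∘ ⇑e'') := by
              refine Finset.sum_congr rfl fun g _ => ?_
              exact Equiv.sum_comp (Equiv.mulLeft e⁻¹)
                (fun e'' => (starRingEnd ℂ) (v g) * v (g ∘ ⇑e''))
          _ = Sval d v := Finset.sum_comm
    _ = (Fintype.card (Equiv.Perm α) : ℂ) * Sval d v := by
        rw [Finset.sum_const, Finset.card_univ, nsmul_eq_mul]

lemma card_mul_sval_re (v : (α → Fin d) → ℂ) :
    (Fintype.card (Equiv.Perm α) : ℝ) * (Sval d v).re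
      = ∑ f : α → Fin d, Complex.normSq (symv d v f) := by
  have h2 := congrArg Complex.re (conj_symv_sum (d := d) v)
  simp only [Complex.re_sum, conj_mul_self, Complex.ofReal_re, Complex.mul_re,
    Complex.natCast_re, Complex.natCast_im, zero_mul, sub_zero] at h2
  exact h2.symm

lemma sval_re_nonneg (v : (α → Fin d) → ℂ) : 0 ≤ (Sval d v).re := by
  have h := card_mul_sval_re (d := d) v
  have hpos : (0:ℝ) < (Fintype.card (Equiv.Perm α) : ℝ) := by
    exact_mod_cast Fintype.card_pos
  nlinarith [Finset.sum_nonneg (fun f (_ : f ∈ Finset.univ) =>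
    Complex.normSq_nonneg (symv d v f))]

end SvalSec

section MainIneq
variable {L R : Type*} [Fintype L] [Fintype R] [DecidableEq L] [DecidableEq R]

noncomputable def emb : Equiv.Perm L × Equiv.Perm R → Equiv.Perm (L ⊕ R) :=
  fun p => Equiv.sumCongr p.1 p.2

lemma emb_inj : Function.Injective (emb (L := L) (R := R)) := by
  intro p q h
  have h1 : ∀ i : L, p.1 i = q.1 i := by
    intro i
    have := congrArg (fun e : Equiv.Perm (L ⊕ R) => e (inl i)) h
    simpa [emb] using this
  have h2 : ∀ j : R, p.2 j = q.2 j := by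
    intro j
    have := congrArg (fun e : Equiv.Perm (L ⊕ R) => e (inr j)) h
    simpa [emb] using this
  exact Prod.ext (Equiv.ext h1) (Equiv.ext h2)

lemma comp_emb_inl (F : (L ⊕ R) → Fin d) (p : Equiv.Perm L × Equiv.Perm R) :
    (F ∘ ⇑(emb p)) ∘ inl = (F ∘ inl) ∘ ⇑p.1 := by
  funext i
  simp [emb]

lemma comp_emb_inr (F : (L ⊕ R) → Fin d) (p : Equiv.Perm L × Equiv.Perm R) :
    (F ∘ ⇑(emb p)) ∘ inr = (F ∘ inr) ∘ ⇑p.2 := by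
  funext j
  simp [emb]

lemma symv_prod_expand (v : (L → Fin d) → ℂ) (w : (R → Fin d) → ℂ)
    (F : (L ⊕ R) → Fin d) :
    symv d v (F ∘ inl) * symv d w (F ∘ inr)
      = ∑ p : Equiv.Perm L × Equiv.Perm R,
          v ((F ∘ ⇑(emb p)) ∘ inl) * w ((F ∘ ⇑(emb p)) ∘ inr) := by
  rw [symv, symv, Fintype.sum_mul_sum, Fintype.sum_prod_type]
  refine Finset.sum_congr rfl fun e₁ _ => ?_
  refine Finset.sum_congr rfl fun e₂ _ => ?_
  rw [comp_emb_inl, comp_emb_inr]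

lemma sval_symv_prod (v : (L → Fin d) → ℂ) (w : (R → Fin d) → ℂ) :
    Sval d (fun F : (L ⊕ R) → Fin d => symv d v (F ∘ inl) * symv d w (F ∘ inr))
      = (Fintype.card (Equiv.Perm L × Equiv.Perm R) : ℂ)^2
          * Sval d (fun F : (L ⊕ R) → Fin d => v (F ∘ inl) * w (F ∘ inr)) := by
  set u : ((L ⊕ R) → Fin d) → ℂ := fun F => v (F ∘ inl) * w (F ∘ inr) with hu
  have hU : ∀ F : (L ⊕ R) → Fin d,
      symv d v (F ∘ inl) * symv d w (F ∘ inr)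
        = ∑ p : Equiv.Perm L × Equiv.Perm R, u (F ∘ ⇑(emb p)) :=
    fun F => symv_prod_expand v w F
  calc Sval d (fun F : (L ⊕ R) → Fin d => symv d v (F ∘ inl) * symv d w (F ∘ inr))
      = ∑ π : Equiv.Perm (L ⊕ R), ∑ p : Equiv.Perm L × Equiv.Perm R,
          ∑ q : Equiv.Perm L × Equiv.Perm R, ∑ F : (L ⊕ R) → Fin d,
            (starRingEnd ℂ) (u (F ∘ ⇑(emb p))) * u (F ∘ ⇑(π * emb q)) := by
        rw [Sval]
        refine Finset.sum_congr rfl fun π _ => ?_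
        calc ∑ F : (L ⊕ R) → Fin d,
              (starRingEnd ℂ) (symv d v (F ∘ inl) * symv d w (F ∘ inr)) *
                (symv d v ((F ∘ ⇑π) ∘ inl) * symv d w ((F ∘ ⇑π) ∘ inr))
            = ∑ F : (L ⊕ R) → Fin d, ∑ p : Equiv.Perm L × Equiv.Perm R,
                ∑ q : Equiv.Perm L × Equiv.Perm R,
                  (starRingEnd ℂ) (u (F ∘ ⇑(emb p))) * u (F ∘ ⇑(π * emb q)) := by
              refine Finset.sum_congr rfl fun F _ => ?_
              rw [hU F, hU (F ∘ ⇑π), map_sum, Finset.sum_mul_sum]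
              refine Finset.sum_congr rfl fun p _ => ?_
              refine Finset.sum_congr rfl fun q _ => ?_
              rw [comp_perm_assoc]
          _ = ∑ p : Equiv.Perm L × Equiv.Perm R, ∑ F : (L ⊕ R) → Fin d,
                ∑ q : Equiv.Perm L × Equiv.Perm R,
                  (starRingEnd ℂ) (u (F ∘ ⇑(emb p))) * u (F ∘ ⇑(π * emb q)) :=
              Finset.sum_comm
          _ = ∑ p : Equiv.Perm L × Equiv.Perm R,
                ∑ q : Equiv.Perm L × Equiv.Perm R, ∑ F : (L ⊕ R) → Fin d,
                  (starRingEnd ℂ) (u (F ∘ ⇑(emb p))) * u (F ∘ ⇑(π * emb q)) :=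
              Finset.sum_congr rfl fun p _ => Finset.sum_comm
    _ = ∑ p : Equiv.Perm L × Equiv.Perm R, ∑ q : Equiv.Perm L × Equiv.Perm R,
          ∑ π : Equiv.Perm (L ⊕ R), ∑ F : (L ⊕ R) → Fin d,
            (starRingEnd ℂ) (u (F ∘ ⇑(emb p))) * u (F ∘ ⇑(π * emb q)) := by
        rw [Finset.sum_comm]
        refine Finset.sum_congr rfl fun p _ => Finset.sum_comm
    _ = ∑ _p : Equiv.Perm L × Equiv.Perm R, ∑ _q : Equiv.Perm L × Equiv.Perm R,
          Sval d u := by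
        refine Finset.sum_congr rfl fun p _ => ?_
        refine Finset.sum_congr rfl fun q _ => ?_
        calc ∑ π : Equiv.Perm (L ⊕ R), ∑ F : (L ⊕ R) → Fin d,
              (starRingEnd ℂ) (u (F ∘ ⇑(emb p))) * u (F ∘ ⇑(π * emb q))
            = ∑ π : Equiv.Perm (L ⊕ R), ∑ F : (L ⊕ R) → Fin d,
                (starRingEnd ℂ) (u (F ∘ ⇑(emb p))) *
                  u ((F ∘ ⇑(emb p)) ∘ ⇑((emb p)⁻¹ * π * emb q)) := by
              refine Finset.sum_congr rfl fun π _ => ?_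
              refine Finset.sum_congr rfl fun F _ => ?_
              have hperm : emb p * ((emb p)⁻¹ * π * emb q) = π * emb q := by group
              rw [comp_perm_assoc, hperm]
          _ = ∑ π : Equiv.Perm (L ⊕ R), ∑ G : (L ⊕ R) → Fin d,
                (starRingEnd ℂ) (u G) * u (G ∘ ⇑((emb p)⁻¹ * π * emb q)) :=
              Finset.sum_congr rfl fun π _ => sum_precomp (d := d) (M := ℂ) (emb p)
                (fun G => (starRingEnd ℂ) (u G) * u (G ∘ ⇑((emb p)⁻¹ * π * emb q)))
          _ = ∑ π : Equiv.Perm (L ⊕ R), ∑ G : (L ⊕ R) → Fin d,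
                (starRingEnd ℂ) (u G) * u (G ∘ ⇑π) := by
              exact Equiv.sum_comp
                ((Equiv.mulLeft (emb p)⁻¹).trans (Equiv.mulRight (emb (L := L) (R := R) q)))
                (fun ρ => ∑ G : (L ⊕ R) → Fin d,
                  (starRingEnd ℂ) (u G) * u (G ∘ ⇑ρ))
          _ = Sval d u := rfl
    _ = (Fintype.card (Equiv.Perm L × Equiv.Perm R) : ℂ)^2 * Sval d u := by
        rw [Finset.sum_const, Finset.sum_const, Finset.card_univ, smul_smul, nsmul_eq_mul]
        push_cast
        ring


theorem main_ineq (v : (L → Fin d) → ℂ) (w : (R → Fin d) → ℂ) :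
    (Sval d v).re * (Sval d w).re
      ≤ (Sval d (fun F : (L ⊕ R) → Fin d => v (F ∘ inl) * w (F ∘ inr))).re := by
  classical
  have hcore : ∀ π : Equiv.Perm (L ⊕ R),
      0 ≤ (∑ F : (L ⊕ R) → Fin d,
        (starRingEnd ℂ) (symv d v (F ∘ inl) * symv d w (F ∘ inr)) *
          (symv d v ((F ∘ ⇑π) ∘ inl) * symv d w ((F ∘ ⇑π) ∘ inr))).re :=
    fun π => core (d := d) (symv d v) (symv d w)
      (fun e f => symv_comp_perm v e f) (fun e g => symv_comp_perm w e g) π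
  have hsplit : (Sval d (fun F : (L ⊕ R) → Fin d =>
        symv d v (F ∘ inl) * symv d w (F ∘ inr))).re
      = ∑ π : Equiv.Perm (L ⊕ R), (∑ F : (L ⊕ R) → Fin d,
          (starRingEnd ℂ) (symv d v (F ∘ inl) * symv d w (F ∘ inr)) *
            (symv d v ((F ∘ ⇑π) ∘ inl) * symv d w ((F ∘ ⇑π) ∘ inr))).re := by
    unfold Sval
    rw [Complex.re_sum]
  have hTemb : ∀ p : Equiv.Perm L × Equiv.Perm R,
      (∑ F : (L ⊕ R) → Fin d,
        (starRingEnd ℂ) (symv d v (F ∘ inl) * symv d w (F ∘ inr)) *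
          (symv d v ((F ∘ ⇑(emb p)) ∘ inl) * symv d w ((F ∘ ⇑(emb p)) ∘ inr))).re
      = (∑ f : L → Fin d, Complex.normSq (symv d v f)) *
        (∑ g : R → Fin d, Complex.normSq (symv d w g)) := by
    intro p
    have h1 : ∀ F : (L ⊕ R) → Fin d,
        symv d v ((F ∘ ⇑(emb p)) ∘ inl) * symv d w ((F ∘ ⇑(emb p)) ∘ inr)
          = symv d v (F ∘ inl) * symv d w (F ∘ inr) := by
      intro F
      rw [comp_emb_inl, comp_emb_inr, symv_comp_perm, symv_comp_perm]
    calc (∑ F : (L ⊕ R) → Fin d,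
          (starRingEnd ℂ) (symv d v (F ∘ inl) * symv d w (F ∘ inr)) *
            (symv d v ((F ∘ ⇑(emb p)) ∘ inl) * symv d w ((F ∘ ⇑(emb p)) ∘ inr))).re
        = (∑ F : (L ⊕ R) → Fin d,
            ((Complex.normSq (symv d v (F ∘ inl) * symv d w (F ∘ inr)) : ℝ) : ℂ)).re := by
          congr 1
          refine Finset.sum_congr rfl fun F _ => ?_
          rw [h1 F, conj_mul_self]
      _ = ∑ F : (L ⊕ R) → Fin d,
            Complex.normSq (symv d v (F ∘ inl) * symv d w (F ∘ inr)) := by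
          rw [Complex.re_sum]
          exact Finset.sum_congr rfl fun F _ => Complex.ofReal_re _
      _ = ∑ f : L → Fin d, ∑ g : R → Fin d,
            Complex.normSq (symv d v f) * Complex.normSq (symv d w g) := by
          rw [sum_elim (d := d) (M := ℝ)]
          refine Finset.sum_congr rfl fun f _ => ?_
          refine Finset.sum_congr rfl fun g _ => ?_
          rw [Sum.elim_comp_inl, Sum.elim_comp_inr, Complex.normSq_mul]
      _ = (∑ f : L → Fin d, Complex.normSq (symv d v f)) *
            (∑ g : R → Fin d, Complex.normSq (symv d w g)) :=
          (Fintype.sum_mul_sum _ _).symm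
  -- lower bound of the symmetrized Sval
  have hlow : (Fintype.card (Equiv.Perm L × Equiv.Perm R) : ℝ) *
      ((∑ f : L → Fin d, Complex.normSq (symv d v f)) *
        (∑ g : R → Fin d, Complex.normSq (symv d w g)))
      ≤ (Sval d (fun F : (L ⊕ R) → Fin d =>
          symv d v (F ∘ inl) * symv d w (F ∘ inr))).re := by
    rw [hsplit]
    have e1 : (Fintype.card (Equiv.Perm L × Equiv.Perm R) : ℝ) *
        ((∑ f : L → Fin d, Complex.normSq (symv d v f)) *
          (∑ g : R → Fin d, Complex.normSq (symv d w g)))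
        = ∑ π ∈ Finset.image (emb (L := L) (R := R)) Finset.univ,
            (∑ F : (L ⊕ R) → Fin d,
              (starRingEnd ℂ) (symv d v (F ∘ inl) * symv d w (F ∘ inr)) *
                (symv d v ((F ∘ ⇑π) ∘ inl) * symv d w ((F ∘ ⇑π) ∘ inr))).re := by
      rw [Finset.sum_image (fun p _ q _ h => emb_inj h)]
      rw [Finset.sum_congr rfl (fun p _ => hTemb p), Finset.sum_const, Finset.card_univ,
        nsmul_eq_mul]
    rw [e1]
    exact Finset.sum_le_sum_of_subset_of_nonneg (Finset.subset_univ _)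
      (fun π _ _ => hcore π)
  have h3 := sval_symv_prod (d := d) v w
  have h4 : (Sval d (fun F : (L ⊕ R) → Fin d =>
        symv d v (F ∘ inl) * symv d w (F ∘ inr))).re
      = (Fintype.card (Equiv.Perm L × Equiv.Perm R) : ℝ)^2 *
        (Sval d (fun F : (L ⊕ R) → Fin d => v (F ∘ inl) * w (F ∘ inr))).re := by
    rw [h3]
    have hc2 : ((Fintype.card (Equiv.Perm L × Equiv.Perm R) : ℂ))^2
        = (((Fintype.card (Equiv.Perm L × Equiv.Perm R))^2 : ℕ) : ℂ) := by push_cast; ring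
    rw [hc2]
    simp only [Complex.mul_re, Complex.natCast_re, Complex.natCast_im, zero_mul, sub_zero]
    push_cast
    ring
  have hNv := card_mul_sval_re (d := d) v
  have hNw := card_mul_sval_re (d := d) w
  have hcard : (Fintype.card (Equiv.Perm L × Equiv.Perm R) : ℝ)
      = (Fintype.card (Equiv.Perm L) : ℝ) * (Fintype.card (Equiv.Perm R) : ℝ) := by
    rw [Fintype.card_prod]
    push_cast
    ring
  have hfin : (Fintype.card (Equiv.Perm L × Equiv.Perm R) : ℝ)^2 *
      ((Sval d v).re * (Sval d w).re)
      ≤ (Fintype.card (Equiv.Perm L × Equiv.Perm R) : ℝ)^2 *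
        (Sval d (fun F : (L ⊕ R) → Fin d => v (F ∘ inl) * w (F ∘ inr))).re := by
    calc (Fintype.card (Equiv.Perm L × Equiv.Perm R) : ℝ)^2 *
          ((Sval d v).re * (Sval d w).re)
        = (Fintype.card (Equiv.Perm L × Equiv.Perm R) : ℝ) *
            (((Fintype.card (Equiv.Perm L) : ℝ) * (Sval d v).re) *
              ((Fintype.card (Equiv.Perm R) : ℝ) * (Sval d w).re)) := by
          rw [hcard]; ring
      _ = (Fintype.card (Equiv.Perm L × Equiv.Perm R) : ℝ) *
            ((∑ f : L → Fin d, Complex.normSq (symv d v f)) *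
              (∑ g : R → Fin d, Complex.normSq (symv d w g))) := by
          rw [hNv, hNw]
      _ ≤ (Sval d (fun F : (L ⊕ R) → Fin d =>
            symv d v (F ∘ inl) * symv d w (F ∘ inr))).re := hlow
      _ = (Fintype.card (Equiv.Perm L × Equiv.Perm R) : ℝ)^2 *
            (Sval d (fun F : (L ⊕ R) → Fin d => v (F ∘ inl) * w (F ∘ inr))).re := h4
  have hpos : (0:ℝ) < (Fintype.card (Equiv.Perm L × Equiv.Perm R) : ℝ)^2 := by
    have : 0 < Fintype.card (Equiv.Perm L × Equiv.Perm R) := Fintype.card_pos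
    positivity
  exact le_of_mul_le_mul_left hfin hpos

lemma trace_perm_sum {α : Type*} [Fintype α] [DecidableEq α]
    (ρ : Matrix (α → Fin d) (α → Fin d) ℂ) :
    (ρ * ∑ π : Equiv.Perm α, permOp d α π).trace
      = ∑ π : Equiv.Perm α, ∑ f : α → Fin d, ρ f (f ∘ ⇑π) := by
  rw [Matrix.mul_sum, trace_sum]
  have h1 : ∀ π : Equiv.Perm α,
      (ρ * permOp d α π).trace = ∑ f : α → Fin d, ρ f (f ∘ ⇑π⁻¹) := by
    intro π
    rw [Matrix.trace]
    refine Finset.sum_congr rfl fun f _ => ?_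
    rw [Matrix.diag_apply, Matrix.mul_apply]
    rw [Finset.sum_eq_single (f ∘ ⇑π⁻¹)]
    · rw [permOp]; simp
    · intro g _ hg
      rw [permOp]
      simp [hg]
      exact fun h => absurd h hg
    · intro h
      exact absurd (Finset.mem_univ _) h
  calc ∑ π : Equiv.Perm α, (ρ * permOp d α π).trace
      = ∑ π : Equiv.Perm α, ∑ f : α → Fin d, ρ f (f ∘ ⇑π⁻¹) :=
        Finset.sum_congr rfl fun π _ => h1 π
    _ = ∑ π : Equiv.Perm α, ∑ f : α → Fin d, ρ f (f ∘ ⇑π) :=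
        Equiv.sum_comp (Equiv.inv (Equiv.Perm α))
          (fun π => ∑ f : α → Fin d, ρ f (f ∘ ⇑π))

end MainIneq
end Stmt14Aux


open Stmt14Aux in
/-- Superadditivity of symmetric-subspace overlaps (Lemma 16 of Chen–Cotler–Huang–Li
as used in the paper): for density matrices `ρ_x` on `x` qudits and `ρ_y` on `y` qudits,
`tr((ρ_x ⊗ ρ_y)·Σ_{π ∈ S_{x+y}} P_π) ≥ tr(ρ_x·Σ_{π ∈ S_x} P_π)·tr(ρ_y·Σ_{π ∈ S_y} P_π)`. -/
theorem stmt_14 (x y d : ℕ) (hx : 1 ≤ x) (hy : 1 ≤ y) (hd : 1 ≤ d)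
    (ρx : Matrix (Fin x → Fin d) (Fin x → Fin d) ℂ)
    (hρx : ρx.PosSemidef) (hρxtr : ρx.trace = 1)
    (ρy : Matrix (Fin y → Fin d) (Fin y → Fin d) ℂ)
    (hρy : ρy.PosSemidef) (hρytr : ρy.trace = 1)
    (M : Matrix ((Fin x ⊕ Fin y) → Fin d) ((Fin x ⊕ Fin y) → Fin d) ℂ)
    (hM : ∀ F G, M F G =
      ρx (F ∘ Sum.inl) (G ∘ Sum.inl) * ρy (F ∘ Sum.inr) (G ∘ Sum.inr)) :
    (Matrix.trace (M * ∑ π : Equiv.Perm (Fin x ⊕ Fin y), permOp d (Fin x ⊕ Fin y) π)).re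
      ≥ (Matrix.trace (ρx * ∑ π : Equiv.Perm (Fin x), permOp d (Fin x) π)).re *
        (Matrix.trace (ρy * ∑ π : Equiv.Perm (Fin y), permOp d (Fin y) π)).re := by
  classical
  obtain ⟨Cx, hCx⟩ := psd_eq_ct_mul_self hρx
  obtain ⟨Cy, hCy⟩ := psd_eq_ct_mul_self hρy
  have hρxe : ∀ f g, ρx f g
      = ∑ a : Fin x → Fin d, (starRingEnd ℂ) (Cx a f) * Cx a g := by
    intro f g
    rw [hCx, Matrix.mul_apply]
    refine Finset.sum_congr rfl fun a _ => ?_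
    rw [Matrix.conjTranspose_apply, starRingEnd_apply]
  have hρye : ∀ f g, ρy f g
      = ∑ b : Fin y → Fin d, (starRingEnd ℂ) (Cy b f) * Cy b g := by
    intro f g
    rw [hCy, Matrix.mul_apply]
    refine Finset.sum_congr rfl fun b _ => ?_
    rw [Matrix.conjTranspose_apply, starRingEnd_apply]
  have htrx : (Matrix.trace (ρx * ∑ π : Equiv.Perm (Fin x), permOp d (Fin x) π))
      = ∑ a : Fin x → Fin d, Sval d (fun f => Cx a f) := by
    rw [trace_perm_sum]
    calc ∑ π : Equiv.Perm (Fin x), ∑ f : Fin x → Fin d, ρx f (f ∘ ⇑π)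
        = ∑ π : Equiv.Perm (Fin x), ∑ f : Fin x → Fin d, ∑ a : Fin x → Fin d,
            (starRingEnd ℂ) (Cx a f) * Cx a (f ∘ ⇑π) :=
          Finset.sum_congr rfl fun π _ => Finset.sum_congr rfl fun f _ => hρxe f (f ∘ ⇑π)
      _ = ∑ π : Equiv.Perm (Fin x), ∑ a : Fin x → Fin d, ∑ f : Fin x → Fin d,
            (starRingEnd ℂ) (Cx a f) * Cx a (f ∘ ⇑π) :=
          Finset.sum_congr rfl fun π _ => Finset.sum_comm
      _ = ∑ a : Fin x → Fin d, ∑ π : Equiv.Perm (Fin x), ∑ f : Fin x → Fin d,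
            (starRingEnd ℂ) (Cx a f) * Cx a (f ∘ ⇑π) := Finset.sum_comm
      _ = ∑ a : Fin x → Fin d, Sval d (fun f => Cx a f) := rfl
  have htry : (Matrix.trace (ρy * ∑ π : Equiv.Perm (Fin y), permOp d (Fin y) π))
      = ∑ b : Fin y → Fin d, Sval d (fun g => Cy b g) := by
    rw [trace_perm_sum]
    calc ∑ π : Equiv.Perm (Fin y), ∑ g : Fin y → Fin d, ρy g (g ∘ ⇑π)
        = ∑ π : Equiv.Perm (Fin y), ∑ g : Fin y → Fin d, ∑ b : Fin y → Fin d,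
            (starRingEnd ℂ) (Cy b g) * Cy b (g ∘ ⇑π) :=
          Finset.sum_congr rfl fun π _ => Finset.sum_congr rfl fun g _ => hρye g (g ∘ ⇑π)
      _ = ∑ π : Equiv.Perm (Fin y), ∑ b : Fin y → Fin d, ∑ g : Fin y → Fin d,
            (starRingEnd ℂ) (Cy b g) * Cy b (g ∘ ⇑π) :=
          Finset.sum_congr rfl fun π _ => Finset.sum_comm
      _ = ∑ b : Fin y → Fin d, ∑ π : Equiv.Perm (Fin y), ∑ g : Fin y → Fin d,
            (starRingEnd ℂ) (Cy b g) * Cy b (g ∘ ⇑π) := Finset.sum_comm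
      _ = ∑ b : Fin y → Fin d, Sval d (fun g => Cy b g) := rfl
  have hMe : ∀ F G, M F G = ∑ a : Fin x → Fin d, ∑ b : Fin y → Fin d,
      (starRingEnd ℂ) (Cx a (F ∘ Sum.inl) * Cy b (F ∘ Sum.inr)) *
        (Cx a (G ∘ Sum.inl) * Cy b (G ∘ Sum.inr)) := by
    intro F G
    rw [hM F G, hρxe, hρye, Fintype.sum_mul_sum]
    refine Finset.sum_congr rfl fun a _ => ?_
    refine Finset.sum_congr rfl fun b _ => ?_
    simp only [_root_.map_mul]
    ring
  have htrM : (Matrix.trace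
        (M * ∑ π : Equiv.Perm (Fin x ⊕ Fin y), permOp d (Fin x ⊕ Fin y) π))
      = ∑ a : Fin x → Fin d, ∑ b : Fin y → Fin d,
          Sval d (fun F : (Fin x ⊕ Fin y) → Fin d =>
            Cx a (F ∘ Sum.inl) * Cy b (F ∘ Sum.inr)) := by
    rw [trace_perm_sum]
    calc ∑ π : Equiv.Perm (Fin x ⊕ Fin y), ∑ F : (Fin x ⊕ Fin y) → Fin d, M F (F ∘ ⇑π)
        = ∑ π : Equiv.Perm (Fin x ⊕ Fin y), ∑ F : (Fin x ⊕ Fin y) → Fin d,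
            ∑ a : Fin x → Fin d, ∑ b : Fin y → Fin d,
              (starRingEnd ℂ) (Cx a (F ∘ Sum.inl) * Cy b (F ∘ Sum.inr)) *
                (Cx a ((F ∘ ⇑π) ∘ Sum.inl) * Cy b ((F ∘ ⇑π) ∘ Sum.inr)) :=
          Finset.sum_congr rfl fun π _ => Finset.sum_congr rfl fun F _ => hMe F (F ∘ ⇑π)
      _ = ∑ π : Equiv.Perm (Fin x ⊕ Fin y), ∑ a : Fin x → Fin d,
            ∑ b : Fin y → Fin d, ∑ F : (Fin x ⊕ Fin y) → Fin d,
              (starRingEnd ℂ) (Cx a (F ∘ Sum.inl) * Cy b (F ∘ Sum.inr)) *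
                (Cx a ((F ∘ ⇑π) ∘ Sum.inl) * Cy b ((F ∘ ⇑π) ∘ Sum.inr)) := by
          refine Finset.sum_congr rfl fun π _ => ?_
          rw [Finset.sum_comm]
          exact Finset.sum_congr rfl fun a _ => Finset.sum_comm
      _ = ∑ a : Fin x → Fin d, ∑ b : Fin y → Fin d,
            ∑ π : Equiv.Perm (Fin x ⊕ Fin y), ∑ F : (Fin x ⊕ Fin y) → Fin d,
              (starRingEnd ℂ) (Cx a (F ∘ Sum.inl) * Cy b (F ∘ Sum.inr)) *
                (Cx a ((F ∘ ⇑π) ∘ Sum.inl) * Cy b ((F ∘ ⇑π) ∘ Sum.inr)) := by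
          rw [Finset.sum_comm]
          exact Finset.sum_congr rfl fun a _ => Finset.sum_comm
      _ = ∑ a : Fin x → Fin d, ∑ b : Fin y → Fin d,
            Sval d (fun F : (Fin x ⊕ Fin y) → Fin d =>
              Cx a (F ∘ Sum.inl) * Cy b (F ∘ Sum.inr)) := rfl
  rw [ge_iff_le, htrx, htry, htrM, Complex.re_sum, Complex.re_sum]
  calc (∑ a : Fin x → Fin d, (Sval d (fun f => Cx a f)).re) *
        ∑ b : Fin y → Fin d, (Sval d (fun g => Cy b g)).re
      = ∑ a : Fin x → Fin d, ∑ b : Fin y → Fin d,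
          (Sval d (fun f => Cx a f)).re * (Sval d (fun g => Cy b g)).re :=
        Fintype.sum_mul_sum _ _
    _ ≤ ∑ a : Fin x → Fin d, ∑ b : Fin y → Fin d,
          (Sval d (fun F : (Fin x ⊕ Fin y) → Fin d =>
            Cx a (F ∘ Sum.inl) * Cy b (F ∘ Sum.inr))).re := by
        refine Finset.sum_le_sum fun a _ => ?_
        refine Finset.sum_le_sum fun b _ => ?_
        exact main_ineq (d := d) (fun f => Cx a f) (fun g => Cy b g)
    _ = (∑ a : Fin x → Fin d, ∑ b : Fin y → Fin d,
          Sval d (fun F : (Fin x ⊕ Fin y) → Fin d =>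
            Cx a (F ∘ Sum.inl) * Cy b (F ∘ Sum.inr))).re := by
        rw [Complex.re_sum]
        exact Finset.sum_congr rfl fun a _ => (Complex.re_sum _ _).symm
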